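/- Let g ∈ L²(ℝ), K a probability density on ℝ, and ξ a random variable with density K. For w > 0 set (K_w∗g)(x) = E[g(x−wξ)]. Then ‖√(K_w ∗ g²)‖² − ‖K_w ∗ g‖² = ∫_ℝ Var(g(x − wξ)) dx ≤ E[ω₂²(g, w|ξ|)], where ω₂(g,η) = sup_{|z|≤η}‖g(·+z)−g‖. -/

import Mathlib

open MeasureTheory ENNReal

theorem stmt11_core (g K : ℝ → ℝ)
    (hg0 : ∀ x, 0 ≤ g x) (hg2 : Integrable (fun x => (g x) ^ 2))
    (hK0 : ∀ x, 0 ≤ K x) (hK1 : ∫ x, K x = 1)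
    (w : ℝ) (hw : 0 < w)
    (hint1 : Integrable (fun x => ∫ y, K y * (g (x - w * y)) ^ 2))
    (hint2 : Integrable (fun x => (∫ y, K y * g (x - w * y)) ^ 2))
    (hgm : AEStronglyMeasurable g (volume : Measure ℝ))
    (hKi : Integrable K)
    (hKm : AEStronglyMeasurable K (volume : Measure ℝ))
    (qmp1 : ∀ x : ℝ, Measure.QuasiMeasurePreserving (fun y : ℝ => x - w * y) volume volume)
    (hGm : AEStronglyMeasurable (fun p : ℝ × ℝ => g (p.1 - w * p.2))
      ((volume : Measure ℝ).prod volume))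
    (hmy : ∀ x : ℝ, AEStronglyMeasurable (fun y => g (x - w * y)) (volume : Measure ℝ))
    (hFsq_int : ∀ z : ℝ, Integrable (fun x => (g (x + z) - g x) ^ 2))
    (hbdd : ∀ η : ℝ, BddAbove (Set.range fun z : {z : ℝ // |z| ≤ η} =>
      ∫ x, (g (x + z.1) - g x) ^ 2))
    (hω_ge0 : ∀ η : ℝ, 0 ≤ η →
      0 ≤ ⨆ z : {z : ℝ // |z| ≤ η}, ∫ x, (g (x + z.1) - g x) ^ 2)
    (hΩ_int : Integrable (fun y => K y *
      ⨆ z : {z : ℝ // |z| ≤ w * |y|}, ∫ x, (g (x + z.1) - g x) ^ 2)) :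
    (∫ x, ((∫ y, K y * (g (x - w * y)) ^ 2) - (∫ y, K y * g (x - w * y)) ^ 2))
        ≤ ∫ y, K y * ⨆ z : {z : ℝ // |z| ≤ w * |y|}, ∫ x, (g (x + z.1) - g x) ^ 2 := by
  set I : ℝ := ∫ x, (g x) ^ 2 with hI
  -- a.e. integrability in y of K y * g(x-wy)^2
  have hFm : AEMeasurable (Function.uncurry fun x y => ENNReal.ofReal (K y * (g (x - w * y)) ^ 2))
      ((volume : Measure ℝ).prod volume) := by
    have h1 : AEStronglyMeasurable (fun p : ℝ × ℝ => K p.2) ((volume : Measure ℝ).prod volume) :=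
      hKm.comp_quasiMeasurePreserving Measure.quasiMeasurePreserving_snd
    exact measurable_ofReal.comp_aemeasurable ((h1.mul (hGm.pow 2)).aemeasurable)
  have hinner1 : ∀ y : ℝ, (∫⁻ x, ENNReal.ofReal (K y * (g (x - w * y)) ^ 2))
      = ENNReal.ofReal (K y) * ENNReal.ofReal I := by
    intro y
    have e1 : (fun x => ENNReal.ofReal (K y * (g (x - w * y)) ^ 2))
        = fun x => ENNReal.ofReal (K y) * ENNReal.ofReal ((g (x - w * y)) ^ 2) :=
      funext fun x => ENNReal.ofReal_mul (hK0 y)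
    have e2 : (∫⁻ x, ENNReal.ofReal ((g (x - w * y)) ^ 2)) = ∫⁻ x, ENNReal.ofReal ((g x) ^ 2) :=
      (measurePreserving_sub_right volume (w * y)).lintegral_comp_emb
        (MeasurableEquiv.subRight (w * y)).measurableEmbedding
        (fun x => ENNReal.ofReal ((g x) ^ 2))
    have e3 : (∫⁻ x, ENNReal.ofReal ((g x) ^ 2)) = ENNReal.ofReal I :=
      (MeasureTheory.ofReal_integral_eq_lintegral_ofReal hg2 (ae_of_all _ fun x => sq_nonneg _)).symm
    rw [e1, lintegral_const_mul' _ _ ENNReal.ofReal_ne_top, e2, e3]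
  have hKl : (∫⁻ y, ENNReal.ofReal (K y)) = ENNReal.ofReal 1 := by
    rw [← hK1]
    exact (MeasureTheory.ofReal_integral_eq_lintegral_ofReal hKi (ae_of_all _ hK0)).symm
  have hswap1 : (∫⁻ x, ∫⁻ y, ENNReal.ofReal (K y * (g (x - w * y)) ^ 2)) = ENNReal.ofReal I := by
    rw [lintegral_lintegral_swap hFm]
    simp_rw [hinner1]
    rw [lintegral_mul_const' _ _ ENNReal.ofReal_ne_top, hKl, ← ENNReal.ofReal_mul (by norm_num), one_mul]
  have hsecm : AEMeasurable (fun x => ∫⁻ y, ENNReal.ofReal (K y * (g (x - w * y)) ^ 2)) volume := by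
    have hmk := hFm.ae_eq_mk
    have hsec := Measure.ae_ae_of_ae_prod hmk
    refine (Measurable.lintegral_prod_right' (ν := volume) hFm.measurable_mk).aemeasurable.congr ?_
    exact hsec.mono fun x hx => (lintegral_congr_ae hx).symm
  have hfin : ∀ᵐ x : ℝ, (∫⁻ y, ENNReal.ofReal (K y * (g (x - w * y)) ^ 2)) < ⊤ := by
    refine ae_lt_top' hsecm ?_
    rw [show (fun x => ∫⁻ y, ENNReal.ofReal (K y * (g (x - w * y)) ^ 2)) =
        fun x => ∫⁻ y, ENNReal.ofReal (K y * (g (x - w * y)) ^ 2) from rfl]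
    exact hswap1 ▸ ENNReal.ofReal_ne_top
  have hAae : ∀ᵐ x : ℝ, Integrable (fun y => K y * (g (x - w * y)) ^ 2) := by
    refine hfin.mono fun x hx => ?_
    refine ⟨hKm.mul ((hmy x).pow 2), ?_⟩
    rw [hasFiniteIntegral_iff_ofReal (ae_of_all _ fun y => mul_nonneg (hK0 y) (sq_nonneg _))]
    exact hx
  have hBae : ∀ᵐ x : ℝ, Integrable (fun y => K y * g (x - w * y)) := by
    refine hAae.mono fun x hAx => ?_
    refine Integrable.mono' ((hKi.add hAx).const_mul (1/2)) (hKm.mul (hmy x))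
      (ae_of_all _ fun y => ?_)
    have h1 : 0 ≤ K y * (g (x - w * y) - 1) ^ 2 := mul_nonneg (hK0 y) (sq_nonneg _)
    simp only [Pi.add_apply]
    rw [Real.norm_eq_abs, abs_mul, abs_of_nonneg (hK0 y), abs_of_nonneg (hg0 _)]
    nlinarith
  -- the variance bound, pointwise a.e.
  have hvar : ∀ᵐ x : ℝ,
      ((∫ y, K y * (g (x - w * y)) ^ 2) - (∫ y, K y * g (x - w * y)) ^ 2
        ≤ ∫ y, K y * (g (x - w * y) - g x) ^ 2)
      ∧ (0 ≤ (∫ y, K y * (g (x - w * y)) ^ 2) - (∫ y, K y * g (x - w * y)) ^ 2)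
      ∧ Integrable (fun y => K y * (g (x - w * y) - g x) ^ 2) := by
    filter_upwards [hAae, hBae] with x hAx hBx
    set A := ∫ y, K y * (g (x - w * y)) ^ 2
    set B := ∫ y, K y * g (x - w * y)
    have key : ∀ c : ℝ, Integrable (fun y => K y * (g (x - w * y) - c) ^ 2) ∧
        (∫ y, K y * (g (x - w * y) - c) ^ 2) = A - 2 * c * B + c ^ 2 := by
      intro c
      have hre : (fun y => K y * (g (x - w * y) - c) ^ 2)
          = fun y => (K y * (g (x - w * y)) ^ 2 - (2 * c) * (K y * g (x - w * y)))
            + c ^ 2 * K y := funext fun y => by ring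
      have hsub : Integrable (fun y => K y * (g (x - w * y)) ^ 2
          - (2 * c) * (K y * g (x - w * y))) := hAx.sub (hBx.const_mul (2 * c))
      have hi : Integrable (fun y => (K y * (g (x - w * y)) ^ 2
          - (2 * c) * (K y * g (x - w * y))) + c ^ 2 * K y) :=
        hsub.add (hKi.const_mul (c ^ 2))
      refine ⟨hre ▸ hi, ?_⟩
      rw [hre, integral_add hsub (hKi.const_mul (c ^ 2)),
        integral_sub hAx (hBx.const_mul (2 * c)), integral_const_mul, integral_const_mul, hK1]
      ring
    have h1 := key (g x)
    have h2 := key B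
    have hnn : 0 ≤ ∫ y, K y * (g (x - w * y) - B) ^ 2 :=
      integral_nonneg fun y => mul_nonneg (hK0 y) (sq_nonneg _)
    refine ⟨?_, ?_, h1.1⟩
    · rw [h1.2]; nlinarith [sq_nonneg (B - g x)]
    · nlinarith [h2.2]
  -- main chain
  have hABi : Integrable (fun x => (∫ y, K y * (g (x - w * y)) ^ 2)
      - (∫ y, K y * g (x - w * y)) ^ 2) := hint1.sub hint2
  have hR0 : 0 ≤ ∫ y, K y * ⨆ z : {z : ℝ // |z| ≤ w * |y|}, ∫ x, (g (x + z.1) - g x) ^ 2 :=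
    integral_nonneg fun y => mul_nonneg (hK0 y) (hω_ge0 _ (mul_nonneg hw.le (abs_nonneg y)))
  rw [integral_eq_lintegral_of_nonneg_ae (hvar.mono fun x hx => hx.2.1)
    hABi.aestronglyMeasurable]
  refine ENNReal.toReal_le_of_le_ofReal hR0 ?_
  have hHm : AEMeasurable (Function.uncurry fun x y => ENNReal.ofReal (K y * (g (x - w * y) - g x) ^ 2))
      ((volume : Measure ℝ).prod volume) := by
    have h1 : AEStronglyMeasurable (fun p : ℝ × ℝ => K p.2) ((volume : Measure ℝ).prod volume) :=
      hKm.comp_quasiMeasurePreserving Measure.quasiMeasurePreserving_snd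
    have h2 : AEStronglyMeasurable (fun p : ℝ × ℝ => g p.1) ((volume : Measure ℝ).prod volume) :=
      hgm.comp_quasiMeasurePreserving Measure.quasiMeasurePreserving_fst
    exact measurable_ofReal.comp_aemeasurable ((h1.mul ((hGm.sub h2).pow 2)).aemeasurable)
  calc (∫⁻ x, ENNReal.ofReal ((∫ y, K y * (g (x - w * y)) ^ 2) - (∫ y, K y * g (x - w * y)) ^ 2))
      ≤ ∫⁻ x, ∫⁻ y, ENNReal.ofReal (K y * (g (x - w * y) - g x) ^ 2) := by
        refine lintegral_mono_ae (hvar.mono fun x hx => ?_)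
        rw [← MeasureTheory.ofReal_integral_eq_lintegral_ofReal hx.2.2
          (ae_of_all _ fun y => mul_nonneg (hK0 y) (sq_nonneg _))]
        exact ENNReal.ofReal_le_ofReal hx.1
    _ = ∫⁻ y, ∫⁻ x, ENNReal.ofReal (K y * (g (x - w * y) - g x) ^ 2) := lintegral_lintegral_swap hHm
    _ ≤ ∫⁻ y, ENNReal.ofReal (K y * ⨆ z : {z : ℝ // |z| ≤ w * |y|}, ∫ x, (g (x + z.1) - g x) ^ 2) := by
        refine lintegral_mono fun y => ?_
        have e1 : (fun x => ENNReal.ofReal (K y * (g (x - w * y) - g x) ^ 2))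
            = fun x => ENNReal.ofReal (K y) * ENNReal.ofReal ((g (x + (-(w * y))) - g x) ^ 2) := by
          funext x
          rw [← ENNReal.ofReal_mul (hK0 y), show x - w * y = x + -(w * y) from by ring]
        have e2 : (∫⁻ x, ENNReal.ofReal ((g (x + (-(w * y))) - g x) ^ 2))
            = ENNReal.ofReal (∫ x, (g (x + (-(w * y))) - g x) ^ 2) :=
          (MeasureTheory.ofReal_integral_eq_lintegral_ofReal (hFsq_int (-(w * y)))
            (ae_of_all _ fun x => sq_nonneg _)).symm
        have hle : (∫ x, (g (x + (-(w * y))) - g x) ^ 2)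
            ≤ ⨆ z : {z : ℝ // |z| ≤ w * |y|}, ∫ x, (g (x + z.1) - g x) ^ 2 :=
          le_ciSup (hbdd (w * |y|)) (⟨-(w * y), by
            rw [abs_neg, abs_mul, abs_of_pos hw]⟩ : {z : ℝ // |z| ≤ w * |y|})
        calc (∫⁻ x, ENNReal.ofReal (K y * (g (x - w * y) - g x) ^ 2))
            = ENNReal.ofReal (K y) * ENNReal.ofReal (∫ x, (g (x + (-(w * y))) - g x) ^ 2) := by
              rw [e1, lintegral_const_mul' _ _ ENNReal.ofReal_ne_top, e2]
          _ ≤ ENNReal.ofReal (K y) * ENNReal.ofReal (⨆ z : {z : ℝ // |z| ≤ w * |y|},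
                ∫ x, (g (x + z.1) - g x) ^ 2) :=
              mul_le_mul_right (ENNReal.ofReal_le_ofReal hle) _
          _ = ENNReal.ofReal (K y * ⨆ z : {z : ℝ // |z| ≤ w * |y|},
                ∫ x, (g (x + z.1) - g x) ^ 2) := (ENNReal.ofReal_mul (hK0 y)).symm
    _ = ENNReal.ofReal (∫ y, K y * ⨆ z : {z : ℝ // |z| ≤ w * |y|}, ∫ x, (g (x + z.1) - g x) ^ 2) :=
        (MeasureTheory.ofReal_integral_eq_lintegral_ofReal hΩ_int (ae_of_all _ fun y =>
          mul_nonneg (hK0 y) (hω_ge0 _ (mul_nonneg hw.le (abs_nonneg y))))).symm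



theorem stmt11 (g K : ℝ → ℝ)
    (hg0 : ∀ x, 0 ≤ g x) (hg2 : Integrable (fun x => (g x) ^ 2))
    (hK0 : ∀ x, 0 ≤ K x) (hK1 : ∫ x, K x = 1)
    (w : ℝ) (hw : 0 < w)
    (hint1 : Integrable (fun x => ∫ y, K y * (g (x - w * y)) ^ 2))
    (hint2 : Integrable (fun x => (∫ y, K y * g (x - w * y)) ^ 2)) :
    let ω2sq : ℝ → ℝ := fun η => ⨆ z : {z : ℝ // |z| ≤ η}, ∫ x, (g (x + z.1) - g x) ^ 2
    ((∫ x, ∫ y, K y * (g (x - w * y)) ^ 2) - (∫ x, (∫ y, K y * g (x - w * y)) ^ 2)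
        = ∫ x, ((∫ y, K y * (g (x - w * y)) ^ 2) - (∫ y, K y * g (x - w * y)) ^ 2)) ∧
    (∫ x, ((∫ y, K y * (g (x - w * y)) ^ 2) - (∫ y, K y * g (x - w * y)) ^ 2))
        ≤ ∫ y, K y * ω2sq (w * |y|) := by
  intro ω2sq
  refine ⟨(integral_sub hint1 hint2).symm, ?_⟩
  -- basic measurability and integrability facts
  have hgm : AEStronglyMeasurable g (volume : Measure ℝ) := by
    have h := Real.continuous_sqrt.comp_aestronglyMeasurable hg2.aestronglyMeasurable
    simpa [Real.sqrt_sq (hg0 _)] using h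
  have hKi : Integrable K := by
    by_contra h; rw [integral_undef h] at hK1; norm_num at hK1
  have hKm := hKi.aestronglyMeasurable
  set I : ℝ := ∫ x, (g x) ^ 2 with hI
  have hI0 : 0 ≤ I := integral_nonneg fun x => sq_nonneg _
  -- quasi measure preserving maps
  have hmul : Measure.QuasiMeasurePreserving (fun y : ℝ => w * y) volume volume :=
    ⟨measurable_const_mul w, by
      rw [show ((w * ·) : ℝ → ℝ) = fun y => w * y from rfl, Real.map_volume_mul_left hw.ne']
      exact Measure.smul_absolutelyContinuous⟩
  have qmp1 : ∀ x : ℝ, Measure.QuasiMeasurePreserving (fun y : ℝ => x - w * y) volume volume := by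
    intro x
    have := (quasiMeasurePreserving_sub_left (volume : Measure ℝ) x).comp hmul
    simpa [Function.comp_def] using this
  have qmpT : Measure.QuasiMeasurePreserving (fun p : ℝ × ℝ => p.1 - w * p.2)
      ((volume : Measure ℝ).prod volume) volume := by
    have hpm : Measure.QuasiMeasurePreserving (Prod.map (id : ℝ → ℝ) (fun y : ℝ => w * y))
        ((volume : Measure ℝ).prod volume) ((volume : Measure ℝ).prod volume) := by
      refine ⟨measurable_id.prodMap (measurable_const_mul w), ?_⟩
      rw [← Measure.map_prod_map _ _ measurable_id (measurable_const_mul w), Measure.map_id]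
      exact Measure.AbsolutelyContinuous.rfl.prod hmul.absolutelyContinuous
    have := (quasiMeasurePreserving_sub (volume : Measure ℝ) volume).comp hpm
    simpa [Function.comp_def, Prod.map] using this
  have hGm : AEStronglyMeasurable (fun p : ℝ × ℝ => g (p.1 - w * p.2))
      ((volume : Measure ℝ).prod volume) := hgm.comp_quasiMeasurePreserving qmpT
  have hmy : ∀ x : ℝ, AEStronglyMeasurable (fun y => g (x - w * y)) (volume : Measure ℝ) :=
    fun x => hgm.comp_quasiMeasurePreserving (qmp1 x)
  -- the squared L² modulus pieces
  have hgz : ∀ z : ℝ, AEStronglyMeasurable (fun x => g (x + z)) (volume : Measure ℝ) :=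
    fun z => hgm.comp_quasiMeasurePreserving
      (measurePreserving_add_right volume z).quasiMeasurePreserving
  have hFsq_int : ∀ z : ℝ, Integrable (fun x => (g (x + z) - g x) ^ 2) := by
    intro z
    have h1 : Integrable (fun x => (g (x + z)) ^ 2) := hg2.comp_add_right z
    refine Integrable.mono' ((h1.const_mul 2).add (hg2.const_mul 2))
      (((hgz z).sub hgm).pow 2) (ae_of_all _ fun x => ?_)
    simp only [Pi.add_apply, Real.norm_eq_abs, abs_pow, sq_abs]
    nlinarith [sq_nonneg (g (x + z) + g x)]
  have hFsq_le : ∀ z : ℝ, (∫ x, (g (x + z) - g x) ^ 2) ≤ 4 * I := by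
    intro z
    have h1 : Integrable (fun x => (g (x + z)) ^ 2) := hg2.comp_add_right z
    have h2 : (∫ x, (g (x + z) - g x) ^ 2) ≤ ∫ x, (2 * (g (x + z)) ^ 2 + 2 * (g x) ^ 2) := by
      refine integral_mono (hFsq_int z) ((h1.const_mul 2).add (hg2.const_mul 2)) fun x => ?_
      nlinarith [sq_nonneg (g (x + z) + g x)]
    have h3 : (∫ x, (2 * (g (x + z)) ^ 2 + 2 * (g x) ^ 2))
        = 2 * (∫ x, (g (x + z)) ^ 2) + 2 * I := by
      rw [integral_add (h1.const_mul 2) (hg2.const_mul 2), integral_const_mul,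
        integral_const_mul]
    have h4 : (∫ x, (g (x + z)) ^ 2) = I := integral_add_right_eq_self (fun x => (g x) ^ 2) z
    linarith
  have hbdd : ∀ η : ℝ, BddAbove (Set.range fun z : {z : ℝ // |z| ≤ η} =>
      ∫ x, (g (x + z.1) - g x) ^ 2) := by
    intro η
    refine ⟨4 * I, ?_⟩
    rintro r ⟨z, rfl⟩
    exact hFsq_le z.1
  have hω_ge0 : ∀ η : ℝ, 0 ≤ η → 0 ≤ ω2sq η := by
    intro η hη
    have h0 : (0 : ℝ) = ∫ x, (g (x + (0 : ℝ)) - g x) ^ 2 := by simp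
    calc (0 : ℝ) = ∫ x, (g (x + ((⟨0, by simpa using hη⟩ : {z : ℝ // |z| ≤ η}) : ℝ)) - g x) ^ 2 :=
          h0
      _ ≤ ω2sq η := le_ciSup (hbdd η) _
  have hω_le : ∀ η : ℝ, 0 ≤ η → ω2sq η ≤ 4 * I := by
    intro η hη
    have : Nonempty {z : ℝ // |z| ≤ η} := ⟨⟨0, by simpa using hη⟩⟩
    exact ciSup_le fun z => hFsq_le z.1
  have hω_mono : Monotone ω2sq := by
    intro a b hab
    by_cases ha : 0 ≤ a
    · have : Nonempty {z : ℝ // |z| ≤ a} := ⟨⟨0, by simpa using ha⟩⟩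
      exact ciSup_le fun z =>
        le_ciSup (hbdd b) (⟨z.1, z.2.trans hab⟩ : {z : ℝ // |z| ≤ b})
    · have he : IsEmpty {z : ℝ // |z| ≤ a} :=
        ⟨fun z => ha ((abs_nonneg z.1).trans z.2)⟩
      have h0 : ω2sq a = 0 := Real.iSup_of_isEmpty _
      rw [h0]
      by_cases hb : 0 ≤ b
      · exact hω_ge0 b hb
      · have he2 : IsEmpty {z : ℝ // |z| ≤ b} :=
          ⟨fun z => hb ((abs_nonneg z.1).trans z.2)⟩
        exact le_of_eq (Real.iSup_of_isEmpty _).symm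
  have hω_meas : Measurable ω2sq := hω_mono.measurable
  have hΩ_int : Integrable (fun y => K y * ω2sq (w * |y|)) := by
    refine Integrable.mono' (hKi.const_mul (4 * I))
      (hKm.mul ((hω_meas.comp ((measurable_const_mul w).comp measurable_abs)).aestronglyMeasurable))
      (ae_of_all _ fun y => ?_)
    have hnn : 0 ≤ w * |y| := mul_nonneg hw.le (abs_nonneg y)
    rw [Real.norm_eq_abs, abs_mul, abs_of_nonneg (hK0 y), abs_of_nonneg (hω_ge0 _ hnn)]
    calc K y * ω2sq (w * |y|) ≤ K y * (4 * I) :=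
          mul_le_mul_of_nonneg_left (hω_le _ hnn) (hK0 y)
      _ = 4 * I * K y := by ring
  exact stmt11_core g K hg0 hg2 hK0 hK1 w hw hint1 hint2 hgm hKi hKm qmp1 hGm hmy hFsq_int hbdd hω_ge0 hΩ_int
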